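/- For all n ≥ 1 and k ≥ 0, the number of permutations π ∈ S_n with lpk(π) = k and pk(π⁻¹) = 0 equals the binomial coefficient C(n, 2k). -/

import Mathlib

open Finset

section Defs
variable {α : Type*} [LinearOrder α]

/-- Number of descents of a list. -/
def descentsCount : List α → ℕ
  | a :: b :: l => (if b < a then 1 else 0) + descentsCount (b :: l)
  | _ => 0

/-- Number of (interior) peaks of a list. -/
def peaksCount : List α → ℕ
  | a :: b :: c :: l => (if a < b ∧ c < b then 1 else 0) + peaksCount (b :: c :: l)
  | _ => 0

/-- 1 if the list starts with a descent, else 0. -/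
def initDesc : List α → ℕ
  | a :: b :: _ => if b < a then 1 else 0
  | _ => 0

/-- Number of left peaks of a list. -/
def leftPeaksCount (l : List α) : ℕ := initDesc l + peaksCount l

/-- Number of interior direction changes. -/
def turnsCount : List α → ℕ
  | a :: b :: c :: l => (if (a < b ∧ c < b) ∨ (b < a ∧ b < c) then 1 else 0) + turnsCount (b :: c :: l)
  | _ => 0

/-- Number of biruns (maximal monotone consecutive subsequences). -/
def birunsCount (l : List α) : ℕ := if l = [] then 0 else turnsCount l + 1

/-- Number of up-down runs. -/
def udrCount (l : List α) : ℕ := initDesc l + birunsCount l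

/-- `IsAltFrom true l` : the list `l` alternates starting with a descent. -/
def IsAltFrom : Bool → List α → Prop
  | _, [] => True
  | _, [_] => True
  | true, a :: b :: l => b < a ∧ IsAltFrom false (b :: l)
  | false, a :: b :: l => a < b ∧ IsAltFrom true (b :: l)

end Defs

def desP {n : ℕ} (π : Equiv.Perm (Fin n)) : ℕ := descentsCount (List.ofFn ⇑π)
def pkP {n : ℕ} (π : Equiv.Perm (Fin n)) : ℕ := peaksCount (List.ofFn ⇑π)
def lpkP {n : ℕ} (π : Equiv.Perm (Fin n)) : ℕ := leftPeaksCount (List.ofFn ⇑π)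
def brP {n : ℕ} (π : Equiv.Perm (Fin n)) : ℕ := birunsCount (List.ofFn ⇑π)
def udrP {n : ℕ} (π : Equiv.Perm (Fin n)) : ℕ := udrCount (List.ofFn ⇑π)
def AltP {n : ℕ} (π : Equiv.Perm (Fin n)) : Prop := IsAltFrom true (List.ofFn ⇑π)

def fixedCount {n : ℕ} (π : Equiv.Perm (Fin n)) : ℕ :=
  (Finset.univ.filter fun x => π x = x).card
def cycleCount {n : ℕ} (π : Equiv.Perm (Fin n)) : ℕ := π.cycleType.card + fixedCount π
def oddCycleCount {n : ℕ} (π : Equiv.Perm (Fin n)) : ℕ :=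
  (π.cycleType.filter fun l => l % 2 = 1).card + fixedCount π

noncomputable def stirC (n k : ℕ) : ℕ := Nat.card {π : Equiv.Perm (Fin n) // cycleCount π = k}
noncomputable def dOdd (n k : ℕ) : ℕ :=
  Nat.card {π : Equiv.Perm (Fin n) // cycleCount π = k ∧ ∀ l ∈ π.cycleType, l % 2 = 1}
noncomputable def eOdd (n k : ℕ) : ℕ := Nat.card {π : Equiv.Perm (Fin n) // oddCycleCount π = k}
noncomputable def fOdd (n k m : ℕ) : ℕ :=
  Nat.card {π : Equiv.Perm (Fin n) // oddCycleCount π = k ∧ cycleCount π = m}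

noncomputable def eulerE (k : ℕ) : ℕ := Nat.card {π : Equiv.Perm (Fin k) // AltP π}



namespace Stmt3

open List

variable {α : Type*} [LinearOrder α]

/-- descent/ascent pattern of a list -/
def db : List α → List Bool
  | a :: b :: l => decide (b < a) :: db (b :: l)
  | _ => []

/-- number of starts of maximal runs of `true`, given the previous entry -/
def runs : Bool → List Bool → ℕ
  | _, [] => 0
  | prev, b :: l => (if b = true ∧ prev = false then 1 else 0) + runs b l

lemma db_length : ∀ l : List α, (db l).length = l.length - 1
  | [] => rfl
  | [_] => rfl
  | _ :: b :: l => by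
      simp only [db, List.length_cons, db_length (b :: l)]
      omega

lemma db_getElem : ∀ (l : List α) (i : ℕ) (h : i + 1 < l.length),
    (db l)[i]'(by rw [db_length]; omega) = decide (l[i + 1] < l[i])
  | a :: b :: l, 0, h => rfl
  | a :: b :: l, i + 1, h => by
      have := db_getElem (b :: l) i (by simpa using Nat.lt_of_succ_lt_succ h)
      simpa [db] using this

lemma peaks_runs : ∀ (a b : α) (l : List α), List.Chain' (· ≠ ·) (a :: b :: l) →
    peaksCount (a :: b :: l) = runs (decide (b < a)) (db (b :: l))
  | a, b, [], _ => by simp [peaksCount, db, runs]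
  | a, b, c :: t, h => by
      have hab : a ≠ b := (List.isChain_cons_cons.1 h).1
      have h' : List.Chain' (· ≠ ·) (b :: c :: t) := (List.isChain_cons_cons.1 h).2
      have ih := peaks_runs b c t h'
      simp only [peaksCount, db, runs, ih]
      congr 1
      by_cases hba : b < a
      · have : ¬ (a < b) := asymm hba
        simp [hba, this]
      · have : a < b := lt_of_le_of_ne (not_lt.1 hba) hab
        simp [hba, this]

lemma lpk_runs (l : List α) (h : List.Chain' (· ≠ ·) l) :
    leftPeaksCount l = runs false (db l) := by
  match l with
  | [] => rfl
  | [a] => rfl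
  | a :: b :: t =>
      rw [leftPeaksCount, peaks_runs a b t h]
      simp only [db, runs, initDesc]
      by_cases hba : b < a <;> simp [hba, Nat.add_comm]

lemma peaks_incr : ∀ (a : α) (l : List α), List.Chain' (· < ·) l → peaksCount (a :: l) = 0
  | _, [], _ => rfl
  | _, [_], _ => rfl
  | a, b :: c :: t, h => by
      have hbc : b < c := (List.isChain_cons_cons.1 h).1
      have : peaksCount (b :: c :: t) = 0 := peaks_incr b (c :: t) (List.isChain_cons_cons.1 h).2
      simp [peaksCount, this, not_lt.2 hbc.le]

lemma peaks_valley : ∀ (l₁ l₂ : List α), List.Chain' (· > ·) l₁ → List.Chain' (· < ·) l₂ →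
    peaksCount (l₁ ++ l₂) = 0
  | [], l₂, _, h₂ => by
      match l₂ with
      | [] => rfl
      | a :: t => exact peaks_incr a t (List.isChain_cons.1 h₂).2
  | [a], l₂, _, h₂ => peaks_incr a l₂ h₂
  | a :: b :: t, l₂, h₁, h₂ => by
      have hba : b < a := (List.isChain_cons_cons.1 h₁).1
      have ih := peaks_valley (b :: t) l₂ (List.isChain_cons_cons.1 h₁).2 h₂
      match t with
      | [] =>
        match l₂ with
        | [] => rfl
        | c :: t₂ => simpa [peaksCount, asymm hba, (asymm hba : ¬ a < b)] using ih
      | c :: t' => simpa [peaksCount, (asymm hba : ¬ a < b)] using ih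

lemma ascending_of_no_peak : ∀ (a b : α) (l : List α), a < b →
    List.Chain' (· ≠ ·) (a :: b :: l) → peaksCount (a :: b :: l) = 0 →
    List.Chain' (· < ·) (a :: b :: l)
  | a, b, [], hab, _, _ => by exact List.isChain_cons_cons.2 ⟨hab, List.isChain_singleton b⟩
  | a, b, c :: t, hab, hc, hp => by
      have hbc' : b ≠ c := (List.isChain_cons_cons.1 (List.isChain_cons_cons.1 hc).2).1
      have hind : ¬ (a < b ∧ c < b) := fun hcon => by
        simp [peaksCount, hcon] at hp
      have hbc : b < c := lt_of_le_of_ne (not_lt.1 fun h => hind ⟨hab, h⟩) hbc'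
      have hp' : peaksCount (b :: c :: t) = 0 := by
        simp only [peaksCount] at hp; omega
      exact List.isChain_cons_cons.2 ⟨hab,
        ascending_of_no_peak b c t hbc (List.isChain_cons_cons.1 hc).2 hp'⟩

lemma decomp : ∀ (l : List α), List.Chain' (· ≠ ·) l → peaksCount l = 0 →
    ∃ l₁ l₂, l = l₁ ++ l₂ ∧ List.Chain' (· > ·) l₁ ∧ List.Chain' (· < ·) l₂
  | [], _, _ => ⟨[], [], rfl, List.isChain_nil, List.isChain_nil⟩
  | [a], _, _ => ⟨[a], [], rfl, List.isChain_singleton a, List.isChain_nil⟩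
  | a :: b :: t, hc, hp => by
      have hab : a ≠ b := (List.isChain_cons_cons.1 hc).1
      by_cases hba : b < a
      · have hp' : peaksCount (b :: t) = 0 := by
          match t with
          | [] => rfl
          | c :: t' => simp only [peaksCount] at hp ⊢; omega
        obtain ⟨l₁, l₂, heq, h₁, h₂⟩ := decomp (b :: t) (List.isChain_cons_cons.1 hc).2 hp'
        match l₁, heq with
        | [], heq => exact ⟨[a], b :: t, rfl, List.isChain_singleton a, heq ▸ h₂⟩
        | x :: r, heq =>
            have hx : x = b := by simpa using congrArg (·.head?) heq.symm
            subst hx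
            exact ⟨a :: x :: r, l₂, by simpa using heq,
              List.isChain_cons_cons.2 ⟨hba, h₁⟩, h₂⟩
      · have hab' : a < b := lt_of_le_of_ne (not_lt.1 hba) hab
        exact ⟨[], a :: b :: t, rfl, List.isChain_nil, ascending_of_no_peak a b t hab' hc hp⟩

/-! ### counting bool lists -/

def SB : ℕ → Finset (List Bool)
  | 0 => {[]}
  | m + 1 => (SB m).image (List.cons true) ∪ (SB m).image (List.cons false)

lemma mem_SB : ∀ (m : ℕ) (l : List Bool), l ∈ SB m ↔ l.length = m
  | 0, l => by simp [SB, List.length_eq_zero_iff]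
  | m + 1, l => by
      simp only [SB, Finset.mem_union, Finset.mem_image]
      constructor
      · rintro (⟨t, ht, rfl⟩ | ⟨t, ht, rfl⟩) <;>
          simp [(mem_SB m t).1 ht]
      · intro h
        match l with
        | true :: t => exact Or.inl ⟨t, (mem_SB m t).2 (by simpa using h), rfl⟩
        | false :: t => exact Or.inr ⟨t, (mem_SB m t).2 (by simpa using h), rfl⟩

lemma card_SB_filter (m : ℕ) : ∀ k : ℕ,
    ((SB m).filter fun l => runs false l = k).card = (m + 1).choose (2 * k)
    ∧ ((SB m).filter fun l => runs true l = k).card = (m + 1).choose (2 * k + 1) := by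
  induction m with
  | zero =>
      intro k
      match k with
      | 0 => simp [SB, runs, Finset.filter_singleton]
      | k + 1 =>
          rw [Nat.choose_eq_zero_of_lt (by omega), Nat.choose_eq_zero_of_lt (by omega)]
          simp [SB, runs, Finset.filter_singleton]
  | succ m ih =>
      intro k
      have hinj : ∀ b : Bool, Function.Injective (List.cons b) :=
        fun b x y h => by injection h
      have hdisj : ∀ (p : List Bool → Prop) [DecidablePred p],
          Disjoint (((SB m).image (List.cons true)).filter p)
            (((SB m).image (List.cons false)).filter p) := by
        intro p _
        simp only [Finset.disjoint_left, Finset.mem_filter, Finset.mem_image]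
        rintro x ⟨⟨t, _, rfl⟩, _⟩ ⟨⟨s, _, h⟩, _⟩
        exact Bool.noConfusion (List.head_eq_of_cons_eq h)
      have key : ∀ (p : List Bool → Prop) [DecidablePred p],
          ((SB (m+1)).filter p).card
            = ((SB m).filter fun l => p (true :: l)).card
              + ((SB m).filter fun l => p (false :: l)).card := by
        intro p _
        rw [show SB (m+1) = (SB m).image (List.cons true) ∪ (SB m).image (List.cons false) from rfl,
          Finset.filter_union, Finset.card_union_of_disjoint (hdisj p),
          Finset.filter_image, Finset.filter_image,
          Finset.card_image_of_injective _ (hinj true),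
          Finset.card_image_of_injective _ (hinj false)]
      constructor
      · rw [key]
        have h2 : ((SB m).filter fun l => runs false (false :: l) = k).card
            = (m + 1).choose (2 * k) := by
          have : ∀ l, (runs false (false :: l) = k) ↔ (runs false l = k) := by
            intro l; simp [runs]
          rw [Finset.filter_congr (fun l _ => by rw [this l]), (ih k).1]
        match k with
        | 0 =>
            have h1 : ((SB m).filter fun l => runs false (true :: l) = 0) = ∅ := by
              simp only [Finset.filter_eq_empty_iff]
              intro l _; simp [runs]
            rw [h1, h2]
            simp
        | k + 1 =>
            have h1 : ((SB m).filter fun l => runs false (true :: l) = k + 1).card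
                = (m + 1).choose (2 * k + 1) := by
              have : ∀ l, (runs false (true :: l) = k + 1) ↔ (runs true l = k) := by
                intro l; simp [runs]; omega
              rw [Finset.filter_congr (fun l _ => by rw [this l]), (ih k).2]
            rw [h1, h2,
              show 2 * (k+1) = (2 * k + 1) + 1 from by omega,
              Nat.choose_succ_succ (m+1) (2*k+1)]
      · rw [key]
        have h1 : ((SB m).filter fun l => runs true (true :: l) = k).card
            = (m + 1).choose (2 * k + 1) := by
          have : ∀ l, (runs true (true :: l) = k) ↔ (runs true l = k) := by
            intro l; simp [runs]
          rw [Finset.filter_congr (fun l _ => by rw [this l]), (ih k).2]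
        have h2 : ((SB m).filter fun l => runs true (false :: l) = k).card
            = (m + 1).choose (2 * k) := by
          have : ∀ l, (runs true (false :: l) = k) ↔ (runs false l = k) := by
            intro l; simp [runs]
          rw [Finset.filter_congr (fun l _ => by rw [this l]), (ih k).1]
        rw [h1, h2, Nat.choose_succ_succ (m+1) (2*k)]
        simp only [Nat.succ_eq_add_one]
        omega

/-! ### valley permutations from subsets -/

section PermSide

variable {n : ℕ}

def LA (A : Finset (Fin n)) : List (Fin n) :=
  (A.sort (· ≤ ·)).reverse ++ (Aᶜ.sort (· ≤ ·))

lemma LA_nodup (A : Finset (Fin n)) : (LA A).Nodup := by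
  refine List.Nodup.append (List.nodup_reverse.2 (Finset.sort_nodup _ _))
    (Finset.sort_nodup _ _) ?_
  intro x hx hx'
  simp only [List.mem_reverse, Finset.mem_sort, Finset.mem_compl] at hx hx'
  exact hx' hx

lemma LA_mem (A : Finset (Fin n)) (x : Fin n) : x ∈ LA A := by
  by_cases hx : x ∈ A <;> simp [LA, Finset.mem_sort, hx]

lemma LA_length (A : Finset (Fin n)) : (LA A).length = n := by
  simp only [LA, List.length_append, List.length_reverse, Finset.length_sort]
  rw [Finset.card_add_card_compl, Fintype.card_fin]

def sigmaA (A : Finset (Fin n)) : Equiv.Perm (Fin n) :=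
  (finCongr (LA_length A)).symm.trans
    ((LA_nodup A).getEquivOfForallMemList (LA A) (LA_mem A))

lemma sigmaA_apply (A : Finset (Fin n)) (p : Fin n) :
    sigmaA A p = (LA A)[(p : ℕ)]'(by rw [LA_length]; exact p.2) := rfl

lemma sigmaA_mem (A : Finset (Fin n)) (p : Fin n) :
    sigmaA A p ∈ A ↔ (p : ℕ) < A.card := by
  rw [sigmaA_apply]
  by_cases hp : (p : ℕ) < A.card
  · simp only [LA]
    rw [List.getElem_append_left
      (by simpa [Finset.length_sort] using hp)]
    simp only [hp, iff_true, List.getElem_reverse]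
    exact (Finset.mem_sort _).1 (List.getElem_mem _)
  · simp only [LA]
    rw [List.getElem_append_right
      (by simpa [Finset.length_sort] using hp)]
    simp only [hp, iff_false]
    intro hx
    exact Finset.mem_compl.1 ((Finset.mem_sort _).1 (List.getElem_mem _)) hx

lemma sort_lt_of_lt (B : Finset (Fin n)) {i j : ℕ} (hi : i < (B.sort (· ≤ ·)).length)
    (hj : j < (B.sort (· ≤ ·)).length) (hij : i < j) :
    (B.sort (· ≤ ·))[i] < (B.sort (· ≤ ·))[j] := by
  have := (Finset.sortedLT_sort B).strictMono_get
    (show (⟨i, hi⟩ : Fin _) < ⟨j, hj⟩ from hij)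
  simpa using this

lemma sigmaA_desc (A : Finset (Fin n)) (p q : Fin n) (hq : (q : ℕ) < A.card)
    (hpq : p < q) : sigmaA A q < sigmaA A p := by
  have hp : (p : ℕ) < A.card := lt_trans hpq hq
  rw [sigmaA_apply, sigmaA_apply]
  simp only [LA]
  rw [List.getElem_append_left (by simpa [Finset.length_sort] using hq),
    List.getElem_append_left (by simpa [Finset.length_sort] using hp),
    List.getElem_reverse, List.getElem_reverse]
  apply sort_lt_of_lt
  all_goals
    simp only [Finset.length_sort, List.length_reverse]
    have hpq' : (p : ℕ) < (q : ℕ) := hpq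
    omega

lemma sigmaA_asc (A : Finset (Fin n)) (p q : Fin n) (hp : A.card ≤ (p : ℕ))
    (hpq : p < q) : sigmaA A p < sigmaA A q := by
  have hq : A.card ≤ (q : ℕ) := le_trans hp (le_of_lt hpq)
  have hcc := Finset.card_add_card_compl A
  rw [Fintype.card_fin] at hcc
  rw [sigmaA_apply, sigmaA_apply]
  simp only [LA]
  rw [List.getElem_append_right (by simpa [Finset.length_sort] using not_lt.2 hp),
    List.getElem_append_right (by simpa [Finset.length_sort] using not_lt.2 hq)]
  apply sort_lt_of_lt
  all_goals
    simp only [List.length_reverse, Finset.length_sort]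
    have hpq' : (p : ℕ) < (q : ℕ) := hpq
    have hp2 := p.2
    have hq2 := q.2
    omega

lemma symm_lt_iff (A : Finset (Fin n)) (v w : Fin n) (hvw : v < w) :
    (sigmaA A).symm w < (sigmaA A).symm v ↔ w ∈ A := by
  set p := (sigmaA A).symm v with hp0
  set q := (sigmaA A).symm w with hq0
  have hv : sigmaA A p = v := Equiv.apply_symm_apply _ _
  have hw : sigmaA A q = w := Equiv.apply_symm_apply _ _
  by_cases hwA : w ∈ A
  · simp only [hwA, iff_true]
    have hq : (q : ℕ) < A.card := (sigmaA_mem A q).1 (hw ▸ hwA)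
    rcases lt_trichotomy p q with h | h | h
    · exact absurd (hv ▸ hw ▸ sigmaA_desc A p q hq h) (asymm hvw)
    · exact absurd (hv ▸ hw ▸ congrArg (sigmaA A) h) (ne_of_lt hvw)
    · exact h
  · simp only [hwA, iff_false]
    intro hqp
    have hq : A.card ≤ (q : ℕ) := by
      by_contra hlt
      push_neg at hlt
      exact hwA (hw ▸ (sigmaA_mem A q).2 hlt)
    exact absurd (hv ▸ hw ▸ sigmaA_asc A q p hq hqp) (asymm hvw)

lemma ofFn_sigmaA (A : Finset (Fin n)) : List.ofFn ⇑(sigmaA A) = LA A := by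
  apply List.ext_getElem (by simp [LA_length])
  intro i h1 h2
  rw [List.getElem_ofFn]
  exact sigmaA_apply A ⟨i, by simpa using h1⟩

lemma pk_sigmaA (A : Finset (Fin n)) : peaksCount (List.ofFn ⇑(sigmaA A)) = 0 := by
  rw [ofFn_sigmaA]
  apply peaks_valley
  · rw [show @List.Chain' = @List.IsChain from rfl, List.isChain_reverse]
    exact ((Finset.sortedLT_sort A).isChain).imp fun _ _ h => h
  · exact (Finset.sortedLT_sort Aᶜ).isChain

lemma db_word (A : Finset (Fin n)) :
    db (List.ofFn ⇑(sigmaA A)⁻¹)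
      = List.ofFn (fun i : Fin (n - 1) => decide ((⟨i.1 + 1, by omega⟩ : Fin n) ∈ A)) := by
  apply List.ext_getElem (by simp [db_length])
  intro i h1 h2
  have hi : i + 1 < n := by
    simp only [db_length, List.length_ofFn] at h1
    omega
  rw [db_getElem _ i (by simpa using hi)]
  rw [List.getElem_ofFn, List.getElem_ofFn, List.getElem_ofFn]
  have : ⇑(sigmaA A)⁻¹ = ⇑(sigmaA A).symm := rfl
  simp only [this]
  congr 1
  rw [eq_iff_iff]
  exact symm_lt_iff A ⟨i, by omega⟩ ⟨i + 1, hi⟩ (by simp [Fin.lt_def])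

lemma exists_A [NeZero n] (σ : Equiv.Perm (Fin n))
    (h : peaksCount (List.ofFn ⇑σ) = 0) :
    ∃ A : Finset (Fin n), (0 : Fin n) ∉ A ∧ σ = sigmaA A := by
  classical
  have hnd : (List.ofFn ⇑σ).Nodup := List.nodup_ofFn.2 σ.injective
  have hmem : ∀ x : Fin n, x ∈ List.ofFn ⇑σ := fun x =>
    List.mem_ofFn.2 ⟨σ.symm x, by simp⟩
  have hch : (List.ofFn ⇑σ).Chain' (· ≠ ·) := hnd.isChain
  obtain ⟨l₁, l₂, heq, h₁, h₂⟩ := decomp _ hch h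
  obtain ⟨m₁, m₂, heq', h₁', h₂', h0⟩ :
      ∃ m₁ m₂, List.ofFn ⇑σ = m₁ ++ m₂ ∧ List.Chain' (· > ·) m₁
        ∧ List.Chain' (· < ·) m₂ ∧ (0 : Fin n) ∉ m₁ := by
    by_cases h0 : (0 : Fin n) ∈ l₁
    · obtain ⟨s, t, hst⟩ := List.append_of_mem h0
      have hpw : l₁.Pairwise (· > ·) := List.isChain_iff_pairwise.1 h₁
      rw [hst] at hpw
      have hpw2 := (List.pairwise_append.1 hpw).2.1
      have ht : t = [] := by
        rw [List.eq_nil_iff_forall_not_mem]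
        intro y hy
        have := (List.pairwise_cons.1 hpw2).1 y hy
        simp [Fin.lt_def] at this
      subst ht
      have hnd1 : l₁.Nodup := ((List.nodup_append.1 (heq ▸ hnd)).1)
      have hdisj : ∀ x ∈ l₁, x ∉ l₂ := fun x hx hx2 =>
        (List.nodup_append.1 (heq ▸ hnd)).2.2 x hx x hx2 rfl
      refine ⟨s, 0 :: l₂, by rw [heq, hst]; simp, ?_, ?_, ?_⟩
      · exact ((List.pairwise_append.1 hpw).1).isChain
      · rw [show @List.Chain' = @List.IsChain from rfl, List.isChain_cons]
        refine ⟨fun y hy => ?_, h₂⟩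
        have hyl : y ∈ l₂ := List.mem_of_mem_head? hy
        have : y ≠ 0 := fun hy0 => hdisj 0 h0 (hy0 ▸ hyl)
        exact (Fin.pos_iff_ne_zero' y).2 this
      · intro h0s
        rw [hst] at hnd1
        exact (List.nodup_append.1 hnd1).2.2 0 h0s 0 (List.mem_singleton_self 0) rfl
    · exact ⟨l₁, l₂, heq, h₁, h₂, h0⟩
  haveI : IsAntisymm (Fin n) (· < ·) := ⟨fun a b h h' => absurd h (asymm h')⟩
  have hnd12 := heq' ▸ hnd
  have hnd1 : m₁.Nodup := (List.nodup_append.1 hnd12).1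
  have hnd2 : m₂.Nodup := (List.nodup_append.1 hnd12).2.1
  have hdisj : ∀ x ∈ m₁, x ∉ m₂ := fun x hx hx2 => (List.nodup_append.1 hnd12).2.2 x hx x hx2 rfl
  set A := m₁.toFinset with hA
  have hm1 : m₁ = (A.sort (· ≤ ·)).reverse := by
    have hperm : m₁.reverse ~ A.sort (· ≤ ·) := by
      apply List.perm_of_nodup_nodup_toFinset_eq (List.nodup_reverse.2 hnd1)
        (Finset.sort_nodup _ _)
      rw [List.toFinset_reverse, Finset.sort_toFinset]
    have hs1 : m₁.reverse.Pairwise (· < ·) := by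
      rw [List.pairwise_reverse]
      exact (List.isChain_iff_pairwise.1 h₁').imp fun h => h
    have := hperm.eq_of_pairwise' hs1 (Finset.sortedLT_sort A).pairwise
    rw [← this, List.reverse_reverse]
  have hm2 : m₂ = Aᶜ.sort (· ≤ ·) := by
    have hperm : m₂ ~ Aᶜ.sort (· ≤ ·) := by
      apply List.perm_of_nodup_nodup_toFinset_eq hnd2 (Finset.sort_nodup _ _)
      rw [Finset.sort_toFinset]
      ext x
      simp only [List.mem_toFinset, Finset.mem_compl, hA]
      constructor
      · exact fun hx hx' => hdisj x hx' hx
      · intro hx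
        have := hmem x
        rw [heq', List.mem_append] at this
        exact this.resolve_left hx
    exact hperm.eq_of_pairwise'
      (List.isChain_iff_pairwise.1 h₂') (Finset.sortedLT_sort Aᶜ).pairwise
  refine ⟨A, by simpa [hA] using h0, ?_⟩
  have : List.ofFn ⇑σ = List.ofFn ⇑(sigmaA A) := by
    rw [ofFn_sigmaA, LA, heq', hm1, hm2]
  exact Equiv.ext fun x => congrFun (List.ofFn_injective this) x

end PermSide


end Stmt3

theorem card_lpk_k_ipk_zero (n k : ℕ) (hn : 1 ≤ n) :
    Nat.card {π : Equiv.Perm (Fin n) // lpkP π = k ∧ pkP π⁻¹ = 0}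
      = Nat.choose n (2 * k) := by
  classical
  haveI : NeZero n := ⟨by omega⟩
  have hword : ∀ π : Equiv.Perm (Fin n), (List.ofFn ⇑π).Chain' (· ≠ ·) :=
    fun π => (List.nodup_ofFn.2 π.injective).isChain
  set s : Finset (List Bool) := (Stmt3.SB (n - 1)).filter (fun l => Stmt3.runs false l = k)
    with hs
  have hF : ∀ π : {π : Equiv.Perm (Fin n) // lpkP π = k ∧ pkP π⁻¹ = 0},
      Stmt3.db (List.ofFn ⇑π.1) ∈ s := by
    rintro ⟨π, h1, h2⟩
    rw [hs, Finset.mem_filter, Stmt3.mem_SB]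
    refine ⟨?_, ?_⟩
    · rw [Stmt3.db_length, List.length_ofFn]
    · rw [← Stmt3.lpk_runs _ (hword π)]
      exact h1
  let F : {π : Equiv.Perm (Fin n) // lpkP π = k ∧ pkP π⁻¹ = 0} → {l : List Bool // l ∈ s} :=
    fun π => ⟨Stmt3.db (List.ofFn ⇑π.1), hF π⟩
  have hbij : Function.Bijective F := by
    constructor
    · rintro ⟨π, h1, h2⟩ ⟨π', h1', h2'⟩ hFF
      simp only [F, Subtype.mk.injEq] at hFF ⊢
      obtain ⟨A, hA0, hA⟩ := Stmt3.exists_A π⁻¹ h2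
      obtain ⟨A', hA0', hA'⟩ := Stmt3.exists_A π'⁻¹ h2'
      have hπ : π = (Stmt3.sigmaA A)⁻¹ := by rw [← hA, inv_inv]
      have hπ' : π' = (Stmt3.sigmaA A')⁻¹ := by rw [← hA', inv_inv]
      rw [hπ, hπ', Stmt3.db_word, Stmt3.db_word] at hFF
      have hAA : A = A' := by
        ext v
        by_cases hv : v = 0
        · simp [hv, hA0, hA0']
        · have hv0 : v.1 ≠ 0 := fun h => hv (Fin.ext h)
          have hv1 : v.1 - 1 < n - 1 := by have := v.2; omega
          have hcf := congrFun (List.ofFn_injective hFF) ⟨v.1 - 1, hv1⟩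
          simp only [decide_eq_decide] at hcf
          have hveq : (⟨v.1 - 1 + 1, by omega⟩ : Fin n) = v := Fin.ext (by simp; omega)
          rwa [hveq] at hcf
      rw [hπ, hπ', hAA]
    · rintro ⟨l, hl⟩
      rw [hs, Finset.mem_filter, Stmt3.mem_SB] at hl
      obtain ⟨hlen, hrun⟩ := hl
      set A : Finset (Fin n) := Finset.univ.filter
        (fun v : Fin n => 0 < v.1 ∧ l.getD (v.1 - 1) false = true) with hA
      have hdb : Stmt3.db (List.ofFn ⇑(Stmt3.sigmaA A)⁻¹) = l := by
        rw [Stmt3.db_word]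
        apply List.ext_getElem (by simpa using hlen.symm)
        intro i h1 h2
        rw [List.getElem_ofFn]
        have hi1 : i < n - 1 := by simpa using h1
        have hmemA : ((⟨i + 1, by omega⟩ : Fin n) ∈ A) ↔ l[i] = true := by
          rw [hA, Finset.mem_filter]
          simp only [Finset.mem_univ, true_and]
          rw [List.getD_eq_getElem l false (by omega)]
          simp
        rw [show l[i] = decide (l[i] = true) by cases l[i] <;> simp, decide_eq_decide]
        exact hmemA
      refine ⟨⟨(Stmt3.sigmaA A)⁻¹, ?_, ?_⟩, ?_⟩
      · show leftPeaksCount (List.ofFn ⇑(Stmt3.sigmaA A)⁻¹) = k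
        rw [Stmt3.lpk_runs _ (hword _), hdb]
        exact hrun
      · show peaksCount (List.ofFn ⇑((Stmt3.sigmaA A)⁻¹)⁻¹) = 0
        rw [inv_inv]
        exact Stmt3.pk_sigmaA A
      · exact Subtype.ext hdb
  calc Nat.card {π : Equiv.Perm (Fin n) // lpkP π = k ∧ pkP π⁻¹ = 0}
      = Nat.card {l : List Bool // l ∈ s} := Nat.card_congr (Equiv.ofBijective F hbij)
    _ = s.card := Nat.card_eq_finsetCard s
    _ = Nat.choose n (2 * k) := by
        rw [hs, (Stmt3.card_SB_filter (n - 1) k).1]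
        congr 1
        omega
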